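/- For n ≥ 2, the conjugation action of the group of signed permutation matrices (the hyperoctahedral group S_n ≀ ℤ_2, realized as n×n orthogonal matrices with exactly one nonzero entry ±1 in each row and column) on the space of real skew-symmetric n×n matrices so(n,ℝ) is irreducible: the only subspaces of so(n,ℝ) invariant under all maps Ω ↦ WΩWᵀ for signed permutation matrices W are {0} and so(n,ℝ) itself. -/

import Mathlib

open Matrix
/-- A signed permutation matrix: an orthogonal matrix with exactly one nonzero
entry `±1` in each row and column. -/
def IsSignedPerm {n : ℕ} (W : Matrix (Fin n) (Fin n) ℝ) : Prop :=
  ∃ (g : Equiv.Perm (Fin n)) (ε : Fin n → ℝ),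
    (∀ i, ε i = 1 ∨ ε i = -1) ∧ ∀ i j, W i j = if j = g i then ε i else 0

/-- The space `so(n,ℝ)` of real skew-symmetric matrices as a submodule. -/
def soSubmodule (n : ℕ) : Submodule ℝ (Matrix (Fin n) (Fin n) ℝ) where
  carrier := {Ω | Ωᵀ = -Ω}
  add_mem' := by
    intro a b ha hb
    simp only [Set.mem_setOf_eq] at *
    rw [Matrix.transpose_add, ha, hb, neg_add]
  zero_mem' := by simp
  smul_mem' := by
    intro c a ha
    simp only [Set.mem_setOf_eq] at *
    rw [Matrix.transpose_smul, ha, smul_neg]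

/-- Entry formula for conjugation by a (generalized) signed permutation matrix. -/
lemma signedPerm_conj_apply {n : ℕ} (g : Equiv.Perm (Fin n)) (ε : Fin n → ℝ)
    (W Ω : Matrix (Fin n) (Fin n) ℝ)
    (hW : ∀ i j, W i j = if j = g i then ε i else 0) (i j : Fin n) :
    (W * Ω * Wᵀ) i j = ε i * ε j * Ω (g i) (g j) := by
  simp only [Matrix.mul_apply, Matrix.transpose_apply, hW, ite_mul, mul_ite,
    zero_mul, mul_zero, Finset.sum_ite_eq, Finset.sum_ite_eq', Finset.mem_univ, if_true]
  ring

/-- Entry formula for standard basis matrices, in a convenient orientation. -/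
lemma stdBasisMatrix_entry {n : ℕ} (i j k l : Fin n) (c : ℝ) :
    Matrix.single i j c k l = if k = i ∧ l = j then c else 0 := by
  show (if i = k ∧ j = l then c else 0) = _
  simp [eq_comm]

/-- Every skew-symmetric matrix decomposes over the elementary skew matrices. -/
lemma sub_transpose_eq_sum_basis {n : ℕ} (Ω : Matrix (Fin n) (Fin n) ℝ) :
    Ω - Ωᵀ = ∑ k, ∑ l, Ω k l • (Matrix.single k l (1:ℝ) - Matrix.single l k 1) := by
  have h1 : Ω = ∑ k, ∑ l, Matrix.single k l (Ω k l) :=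
    matrix_eq_sum_single Ω
  have h2 : Ωᵀ = ∑ k, ∑ l, Matrix.single l k (Ω k l) := by
    conv_lhs => rw [matrix_eq_sum_single Ωᵀ]
    rw [Finset.sum_comm]
    simp
  simp only [smul_sub, Finset.sum_sub_distrib, smul_single, smul_eq_mul, mul_one]
  rw [← h1, ← h2]

/-- The key entry computation: applying the two sign flips at `i` and `j`
isolates the elementary skew matrix at `(i,j)`. -/
lemma signflip_entry_calc {n : ℕ} (Ω : Matrix (Fin n) (Fin n) ℝ) (i j k l : Fin n)
    (hij : i ≠ j) (hji : Ω j i = -Ω i j) :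
    Ω k l - (if k = j then (-1:ℝ) else 1) * (if l = j then (-1:ℝ) else 1) * Ω k l
      - (if k = i then (-1:ℝ) else 1) * (if l = i then (-1:ℝ) else 1) *
        (Ω k l - (if k = j then (-1:ℝ) else 1) * (if l = j then (-1:ℝ) else 1) * Ω k l)
    = ((4 * Ω i j) • (Matrix.single i j (1:ℝ) - Matrix.single j i 1) :
        Matrix (Fin n) (Fin n) ℝ) k l := by
  simp only [Matrix.smul_apply, Matrix.sub_apply, stdBasisMatrix_entry, smul_eq_mul]
  by_cases hk : k = i <;> by_cases hk' : k = j <;> by_cases hl : l = i <;>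
    by_cases hl' : l = j <;>
    subst_vars <;> simp_all <;> ring

/-- The conjugation action of the hyperoctahedral group on `so(n,ℝ)` is
irreducible: the only invariant subspaces are `{0}` and `so(n,ℝ)`. -/
theorem hyperoctahedral_irreducible_on_so (n : ℕ) (hn : 2 ≤ n)
    (S : Submodule ℝ (Matrix (Fin n) (Fin n) ℝ))
    (hS : S ≤ soSubmodule n)
    (hinv : ∀ W : Matrix (Fin n) (Fin n) ℝ, IsSignedPerm W →
      ∀ Ω ∈ S, W * Ω * Wᵀ ∈ S) :
    S = ⊥ ∨ S = soSubmodule n := by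
  classical
  by_cases hbot : S = ⊥
  · exact Or.inl hbot
  right
  refine le_antisymm hS ?_
  intro Θ hΘmem
  have hΘ : Θᵀ = -Θ := hΘmem
  -- pick a nonzero element of S
  obtain ⟨Ω, hΩS, hΩne⟩ := Submodule.exists_mem_ne_zero_of_ne_bot hbot
  have hΩskew : Ωᵀ = -Ω := hS hΩS
  have hdiag : ∀ k, Ω k k = 0 := by
    intro k
    have := congrFun (congrFun hΩskew k) k
    simp only [transpose_apply, Matrix.neg_apply] at this
    linarith
  have hskewE : ∀ k l, Ω l k = -Ω k l := by
    intro k l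
    have := congrFun (congrFun hΩskew k) l
    simpa using this
  obtain ⟨i, j, hij, hΩij⟩ : ∃ i j, i ≠ j ∧ Ω i j ≠ 0 := by
    by_contra h
    push_neg at h
    apply hΩne
    ext k l
    by_cases hkl : k = l
    · subst hkl; simpa using hdiag k
    · simpa using h k l hkl
  -- diagonal sign-flip matrices
  set εp : Fin n → Fin n → ℝ := fun p k => if k = p then -1 else 1 with hεp
  set Wp : Fin n → Matrix (Fin n) (Fin n) ℝ :=
    fun p => Matrix.of fun a b => if b = a then εp p a else 0 with hWp
  have hWspec : ∀ p a b, Wp p a b = if b = (1 : Equiv.Perm (Fin n)) a then εp p a else 0 := by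
    intro p a b; simp [hWp, Equiv.Perm.one_apply]
    exact if_congr Iff.rfl rfl rfl
  have hWsp : ∀ p, IsSignedPerm (Wp p) := by
    intro p
    refine ⟨1, εp p, fun k => ?_, hWspec p⟩
    by_cases h : k = p <;> simp [hεp, h]
  -- first sign flip at j
  set Ω1 := Ω - Wp j * Ω * (Wp j)ᵀ with hΩ1
  have hΩ1S : Ω1 ∈ S := S.sub_mem hΩS (hinv _ (hWsp j) Ω hΩS)
  have hΩ1e : ∀ k l, Ω1 k l = Ω k l - εp j k * εp j l * Ω k l := by
    intro k l
    simp only [hΩ1, Matrix.sub_apply,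
      signedPerm_conj_apply 1 (εp j) (Wp j) Ω (hWspec j), Equiv.Perm.one_apply]
  -- second sign flip at i
  set Ω2 := Ω1 - Wp i * Ω1 * (Wp i)ᵀ with hΩ2
  have hΩ2S : Ω2 ∈ S := S.sub_mem hΩ1S (hinv _ (hWsp i) Ω1 hΩ1S)
  have hΩ2e : ∀ k l, Ω2 k l = Ω1 k l - εp i k * εp i l * Ω1 k l := by
    intro k l
    simp only [hΩ2, Matrix.sub_apply,
      signedPerm_conj_apply 1 (εp i) (Wp i) Ω1 (hWspec i), Equiv.Perm.one_apply]
  have hΩ2eq : Ω2 = (4 * Ω i j) • (Matrix.single i j (1:ℝ) - Matrix.single j i 1) := by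
    ext k l
    rw [hΩ2e, hΩ1e]
    simp only [hεp]
    exact signflip_entry_calc Ω i j k l hij (hskewE i j)
  -- the elementary skew matrix at (i,j) lies in S
  have hAij : (Matrix.single i j (1:ℝ) - Matrix.single j i 1) ∈ S := by
    have := S.smul_mem (4 * Ω i j)⁻¹ hΩ2S
    rwa [hΩ2eq, smul_smul, inv_mul_cancel₀ (mul_ne_zero (by norm_num) hΩij),
      one_smul] at this
  -- transport to any (k,l) by a permutation
  have hAall : ∀ k l : Fin n,
      (Matrix.single k l (1:ℝ) - Matrix.single l k 1) ∈ S := by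
    intro k l
    by_cases hkl : k = l
    · subst hkl; simp
    · set a := Equiv.swap i k with ha
      set m := a l with hm
      have hak : a k = i := Equiv.swap_apply_right i k
      have hmi : m ≠ i := fun h => hkl (a.injective (h.trans hak.symm)).symm
      set g := a.trans (Equiv.swap j m) with hg
      have hgk : g k = i := by
        simp only [hg, Equiv.trans_apply, hak]
        exact Equiv.swap_apply_of_ne_of_ne hij (Ne.symm hmi)
      have hgl : g l = j := by
        simp only [hg, Equiv.trans_apply, ← hm, Equiv.swap_apply_right]
      set P : Matrix (Fin n) (Fin n) ℝ := Matrix.of fun u v => if v = g u then 1 else 0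
        with hP
      have hPspec : ∀ u v, P u v = if v = g u then (fun _ => (1:ℝ)) u else 0 :=
        fun u v => rfl
      have hPS := hinv P ⟨g, fun _ => 1, fun _ => Or.inl rfl, hPspec⟩ _ hAij
      have heq : P * (Matrix.single i j (1:ℝ) - Matrix.single j i 1) * Pᵀ
          = Matrix.single k l 1 - Matrix.single l k 1 := by
        ext u v
        rw [signedPerm_conj_apply g (fun _ => 1) P _ hPspec]
        simp only [Matrix.sub_apply, one_mul]
        rw [← hgk, ← hgl]
        simp [stdBasisMatrix_entry, g.injective.eq_iff]
      rwa [heq] at hPS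
  -- conclude : Θ is a combination of the elementary skew matrices
  have hΘ2 : Θ = (2⁻¹ : ℝ) • (Θ - Θᵀ) := by
    rw [hΘ, sub_neg_eq_add, ← two_smul ℝ, smul_smul]
    norm_num
  rw [hΘ2, sub_transpose_eq_sum_basis]
  exact S.smul_mem _ (Submodule.sum_mem _ fun k _ => Submodule.sum_mem _ fun l _ =>
    S.smul_mem _ (hAall k l))
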